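/- For n ≥ 1, a subset S ⊆ {1,...,n} arises as the set of positions of occurrences of the consecutive pattern FD (a flat step (1,0) immediately followed by a down step (1,−1)) in some Łukasiewicz path of length n if and only if S ⊆ {2,...,n−1} and any two distinct elements of S differ by at least 2. Consequently the number of such sets is the Fibonacci-type number f_n with f_1 = f_2 = 1 and f_n = f_{n−1} + f_{n−2} for n ≥ 3. -/

import Mathlib

/-- A Łukasiewicz path: vertical step components, each `≥ -1`, all partial sums
nonnegative, total sum `0`. -/
def IsLukas (w : List ℤ) : Prop :=
  (∀ s ∈ w, -1 ≤ s) ∧ (∀ k, 0 ≤ (w.take k).sum) ∧ w.sum = 0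

/-- The set of (1-indexed) positions of occurrences of the consecutive pattern
`FD` in `w`: position `j` with step `j` flat and step `j+1` down. -/
def fdPos (w : List ℤ) : Finset ℕ :=
  (Finset.Icc 1 w.length).filter fun j =>
    w[j - 1]? = some 0 ∧ w[j]? = some (-1)

/-- Fibonacci-type numbers: `f 1 = f 2 = 1`, `f n = f (n-1) + f (n-2)`. -/
def fibf : ℕ → ℕ
  | 0 => 1
  | 1 => 1
  | 2 => 1
  | n + 3 => fibf (n + 2) + fibf (n + 1)

/-- sparse subsets of Icc 2 m -/
def sparseSets (m : ℕ) : Finset (Finset ℕ) :=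
  (Finset.Icc 2 m).powerset.filter fun S => ∀ i ∈ S, i + 1 ∉ S

lemma mem_sparseSets {m : ℕ} {S : Finset ℕ} :
    S ∈ sparseSets m ↔ S ⊆ Finset.Icc 2 m ∧ ∀ i ∈ S, i + 1 ∉ S := by
  simp [sparseSets]

lemma sparseSets_card (m : ℕ) : (sparseSets m).card = fibf (m + 1) := by
  induction m using Nat.strong_induction_on with
  | _ m ih =>
    match m with
    | 0 => decide
    | 1 => decide
    | (m + 2) =>
      have hsplit := Finset.card_filter_add_card_filter_not
        (s := sparseSets (m + 2)) (p := fun S => m + 2 ∈ S)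
      have h1 : (sparseSets (m + 2)).filter (fun S => ¬ m + 2 ∈ S) = sparseSets (m + 1) := by
        ext S
        simp only [Finset.mem_filter, mem_sparseSets]
        constructor
        · rintro ⟨⟨hsub, hnc⟩, hnm⟩
          refine ⟨fun x hx => ?_, hnc⟩
          have := hsub hx
          simp only [Finset.mem_Icc] at this ⊢
          have : x ≠ m + 2 := fun h => hnm (h ▸ hx)
          omega
        · rintro ⟨hsub, hnc⟩
          refine ⟨⟨fun x hx => ?_, hnc⟩, fun hm => ?_⟩
          · have := hsub hx; simp only [Finset.mem_Icc] at this ⊢; omega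
          · have := hsub hm; simp only [Finset.mem_Icc] at this; omega
      have h2 : ((sparseSets (m + 2)).filter (fun S => m + 2 ∈ S)).card = (sparseSets m).card := by
        apply Finset.card_bij' (fun S _ => S.erase (m + 2)) (fun T _ => insert (m + 2) T)
        · intro S hS
          simp only [Finset.mem_filter] at hS
          exact Finset.insert_erase hS.2
        · intro T hT
          rw [mem_sparseSets] at hT
          apply Finset.erase_insert
          intro h; have := hT.1 h; simp only [Finset.mem_Icc] at this; omega
        · intro S hS
          simp only [Finset.mem_filter, mem_sparseSets] at hS
          obtain ⟨⟨hsub, hnc⟩, hm⟩ := hS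
          rw [mem_sparseSets]
          constructor
          · intro x hx
            rw [Finset.mem_erase] at hx
            have hxI := hsub hx.2
            simp only [Finset.mem_Icc] at hxI ⊢
            have : x ≠ m + 1 := by
              intro h; subst h
              exact hnc _ hx.2 hm
            omega
          · intro i hi
            exact fun h => hnc i (Finset.mem_of_mem_erase hi) (Finset.mem_of_mem_erase h)
        · intro T hT
          rw [mem_sparseSets] at hT
          obtain ⟨hsub, hnc⟩ := hT
          simp only [Finset.mem_filter, mem_sparseSets]
          have hmT : m + 2 ∉ T := by
            intro h; have := hsub h; simp only [Finset.mem_Icc] at this; omega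
          refine ⟨⟨fun x hx => ?_, fun i hi => ?_⟩, Finset.mem_insert_self _ _⟩
          · rw [Finset.mem_insert] at hx
            rcases hx with rfl | hx
            · simp [Finset.mem_Icc]
            · have := hsub hx; simp only [Finset.mem_Icc] at this ⊢; omega
          · rw [Finset.mem_insert] at hi ⊢
            rintro (h | h)
            · rcases hi with rfl | hi
              · omega
              · have := hsub hi; simp only [Finset.mem_Icc] at this; omega
            · rcases hi with rfl | hi
              · have := hsub h; simp only [Finset.mem_Icc] at this; omega
              · exact hnc i hi h
      have e1 : fibf (m + 2 + 1) = fibf (m + 1 + 1) + fibf (m + 1) := rfl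
      rw [e1, ← ih (m+1) (by omega), ← ih m (by omega), ← hsplit, h1, h2, Nat.add_comm]

lemma get?_map_range (v : ℕ → ℤ) (i n : ℕ) (h : i < n) :
    ((List.range n).map v)[i]? = some (v i) := by
  rw [List.getElem?_map, List.getElem?_range h]; rfl

lemma get?_map_range_none (v : ℕ → ℤ) (i n : ℕ) (h : ¬ i < n) :
    ((List.range n).map v)[i]? = none := by
  rw [List.getElem?_eq_none_iff]; simpa using Nat.le_of_not_lt h

lemma dist_iff_noconsec (S : Finset ℕ) :
    (∀ i ∈ S, ∀ j ∈ S, i ≠ j → 2 ≤ Nat.dist i j) ↔ (∀ i ∈ S, i + 1 ∉ S) := by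
  constructor
  · intro h i hi hcont
    have := h i hi (i + 1) hcont (by omega)
    simp [Nat.dist] at this
  · intro h i hi j hj hne
    by_contra hlt
    push_neg at hlt
    have hd : i - j + (j - i) < 2 := by simpa [Nat.dist] using hlt
    rcases Nat.lt_or_ge i j with h' | h'
    · have hji : j = i + 1 := by omega
      exact h i hi (hji ▸ hj)
    · have hij : i = j + 1 := by omega
      exact h j hj (hij ▸ hi)

/-- For `n ≥ 1`: `S ⊆ {1,…,n}` is the set of `FD`-positions of some Łukasiewicz
path of length `n` iff `S ⊆ {2,…,n-1}` and distinct elements of `S` differ by at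
least `2`; hence the number of such sets is `fibf n`. -/
theorem fd_position_sets (n : ℕ) (hn : 1 ≤ n) :
    (∀ S : Finset ℕ, S ⊆ Finset.Icc 1 n →
      ((∃ w : List ℤ, IsLukas w ∧ w.length = n ∧ fdPos w = S) ↔
        (S ⊆ Finset.Icc 2 (n - 1) ∧
          ∀ i ∈ S, ∀ j ∈ S, i ≠ j → 2 ≤ Nat.dist i j))) ∧
    Set.ncard {S : Finset ℕ |
        ∃ w : List ℤ, IsLukas w ∧ w.length = n ∧ fdPos w = S} = fibf n := by
  -- main iff, without the S ⊆ Icc 1 n hypothesis, in terms of no-consecutive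
  have key : ∀ S : Finset ℕ,
      (∃ w : List ℤ, IsLukas w ∧ w.length = n ∧ fdPos w = S) ↔
        (S ⊆ Finset.Icc 2 (n - 1) ∧ ∀ i ∈ S, i + 1 ∉ S) := by
    intro S
    constructor
    · rintro ⟨w, hw, hlen, rfl⟩
      have hmem : ∀ j, j ∈ fdPos w ↔
          (1 ≤ j ∧ j ≤ n) ∧ w[j - 1]? = some 0 ∧ w[j]? = some (-1) := by
        intro j; simp [fdPos, hlen, Finset.mem_filter, Finset.mem_Icc, and_assoc]
      constructor
      · intro j hj
        rw [hmem] at hj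
        obtain ⟨⟨hj1, hj2⟩, h3, h4⟩ := hj
        have hjlt : j < n := by
          obtain ⟨hl, -⟩ := List.getElem?_eq_some_iff.mp h4
          omega
        have hj2' : 2 ≤ j := by
          by_contra hc
          have hj1' : j = 1 := by omega
          subst hj1'
          rcases w with _ | ⟨a, _ | ⟨b, r⟩⟩
          · simp at h3
          · simp at h4
          · simp at h3 h4
            subst h3; subst h4
            have ht := hw.2.1 2
            simp at ht
        simp only [Finset.mem_Icc]
        omega
      · intro i hi hcont
        rw [hmem] at hi hcont
        have h1 := hi.2.2
        have h2 := hcont.2.1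
        simp only [Nat.add_sub_cancel] at h2
        rw [h1] at h2
        simp at h2
    · rintro ⟨hsub, hnc⟩
      classical
      set k := S.card with hk
      set v : ℕ → ℤ := fun t => if t = 0 then (k : ℤ) else if t ∈ S then -1 else 0 with hv
      have h0S : 0 ∉ S := by
        intro h; have := hsub h; simp [Finset.mem_Icc] at this
      have hSn : ∀ x ∈ S, x < n := by
        intro x hx; have := hsub hx; simp only [Finset.mem_Icc] at this; omega
      have hsum : ∀ m, 1 ≤ m →
          ∑ t ∈ Finset.range m, v t
            = (k : ℤ) - ((Finset.range m).filter (· ∈ S)).card := by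
        intro m hm
        have hpt : ∀ t, v t = (if t = 0 then (k:ℤ) else 0) + (if t ∈ S then -1 else 0) := by
          intro t
          by_cases h : t = 0
          · subst h; simp [hv, h0S]
          · simp [hv, h]
        rw [Finset.sum_congr rfl (fun t _ => hpt t), Finset.sum_add_distrib]
        have e1 : ∑ t ∈ Finset.range m, (if t = 0 then (k:ℤ) else 0) = (k : ℤ) := by
          rw [Finset.sum_ite_eq' (Finset.range m) 0 (fun _ => (k:ℤ))]
          simp [Finset.mem_range]; omega
        have e2 : ∑ t ∈ Finset.range m, (if t ∈ S then (-1:ℤ) else 0)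
            = -((Finset.range m).filter (· ∈ S)).card := by
          rw [← Finset.sum_filter]
          simp
        rw [e1, e2]
        ring
      have hcard_le : ∀ m, (((Finset.range m).filter (· ∈ S)).card : ℤ) ≤ (k : ℤ) := by
        intro m
        have : (Finset.range m).filter (· ∈ S) ⊆ S := fun x hx => (Finset.mem_filter.mp hx).2
        exact_mod_cast Finset.card_le_card this
      refine ⟨(List.range n).map v, ⟨?_, ?_, ?_⟩, by simp, ?_⟩
      · intro s hs
        simp only [List.mem_map, List.mem_range] at hs
        obtain ⟨t, -, rfl⟩ := hs
        simp only [hv]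
        split_ifs <;> omega
      · intro m
        rw [← List.map_take, List.take_range]
        have : ((List.range (min m n)).map v).sum = ∑ t ∈ Finset.range (min m n), v t := rfl
        rw [this]
        rcases Nat.eq_zero_or_pos (min m n) with h0 | hpos
        · simp [h0]
        · rw [hsum _ hpos]
          have := hcard_le (min m n)
          omega
      · have : ((List.range n).map v).sum = ∑ t ∈ Finset.range n, v t := rfl
        rw [this, hsum n hn]
        have : (Finset.range n).filter (· ∈ S) = S := by
          ext x
          simp only [Finset.mem_filter, Finset.mem_range]
          exact ⟨fun h => h.2, fun h => ⟨hSn x h, h⟩⟩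
        rw [this]
        ring
      · ext j
        simp only [fdPos, Finset.mem_filter, Finset.mem_Icc, List.length_map,
          List.length_range]
        constructor
        · rintro ⟨⟨hj1, hj2⟩, h3, h4⟩
          have hjn : j < n := by
            by_contra hc
            rw [get?_map_range_none v j n hc] at h4
            exact Option.noConfusion rfl (heq_of_eq h4)
          rw [get?_map_range v j n hjn] at h4
          have hvj : v j = -1 := Option.some.inj h4
          simp only [hv] at hvj
          by_cases hj0 : j = 0
          · exfalso
            rw [if_pos hj0] at hvj
            have : (0:ℤ) ≤ (k:ℤ) := Int.natCast_nonneg k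
            omega
          · rw [if_neg hj0] at hvj
            by_cases hjS : j ∈ S
            · exact hjS
            · rw [if_neg hjS] at hvj
              exact absurd hvj (by norm_num)
        · intro hjS
          have hj := hsub hjS
          simp only [Finset.mem_Icc] at hj
          have hjn : j < n := by omega
          have hj1n : j - 1 < n := by omega
          refine ⟨⟨by omega, by omega⟩, ?_, ?_⟩
          · rw [get?_map_range v (j-1) n hj1n]
            have : v (j - 1) = 0 := by
              have h1 : j - 1 ≠ 0 := by omega
              have h2 : j - 1 ∉ S := by
                intro hc
                have := hnc (j - 1) hc
                have hje : j - 1 + 1 = j := by omega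
                rw [hje] at this
                exact this hjS
              simp [hv, h1, h2]
            rw [this]
          · rw [get?_map_range v j n hjn]
            have h1 : j ≠ 0 := by omega
            simp [hv, h1, hjS]
  constructor
  · intro S hS1
    rw [key S]
    constructor
    · rintro ⟨h1, h2⟩
      exact ⟨h1, (dist_iff_noconsec S).mpr h2⟩
    · rintro ⟨h1, h2⟩
      exact ⟨h1, (dist_iff_noconsec S).mp h2⟩
  · have hset : {S : Finset ℕ | ∃ w : List ℤ, IsLukas w ∧ w.length = n ∧ fdPos w = S}
        = ↑(sparseSets (n - 1)) := by
      ext S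
      simp only [Set.mem_setOf_eq, Finset.coe_filter, Finset.mem_coe, mem_sparseSets]
      exact key S
    rw [hset, Set.ncard_coe_finset, sparseSets_card]
    congr 1
    omega
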